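/- Let f, g : [0,1] → [0,1] be normal and convex. Then f ⊓ g = f (i.e., f ⊑ g) if and only if g^L ≤ f^L pointwise and f^R ≤ g^R pointwise. -/

import Mathlib

open unitInterval

instance : Fact ((0:ℝ) ≤ 1) := ⟨zero_le_one⟩

/-- `f^L x = sup {f y : y ≤ x}` -/
noncomputable def fL (f : I → I) (x : I) : I := sSup (f '' {y | y ≤ x})

/-- `f^R x = sup {f y : y ≥ x}` -/
noncomputable def fR (f : I → I) (x : I) : I := sSup (f '' {y | x ≤ y})

/-- meet convolution `(f ⊓ g)(x) = sup { min (f y) (g z) : min y z = x }` -/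
noncomputable def meetConv (f g : I → I) (x : I) : I :=
  sSup {v | ∃ y z, y ⊓ z = x ∧ v = f y ⊓ g z}

private lemma fL_mono (f : I → I) {x y : I} (h : x ≤ y) : fL f x ≤ fL f y :=
  sSup_le_sSup (Set.image_mono fun a ha => le_trans ha h)

private lemma fR_anti (f : I → I) {x y : I} (h : x ≤ y) : fR f y ≤ fR f x :=
  sSup_le_sSup (Set.image_mono fun a ha => le_trans h ha)

private lemma self_le_fL (f : I → I) (x : I) : f x ≤ fL f x :=
  le_sSup ⟨x, le_refl x, rfl⟩

private lemma self_le_fR (f : I → I) (x : I) : f x ≤ fR f x :=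
  le_sSup ⟨x, le_refl x, rfl⟩

theorem stmt_11 (f g : I → I)
    (hnf : sSup (Set.range f) = 1) (hng : sSup (Set.range g) = 1)
    (hcf : ∀ x y z : I, x ≤ y → y ≤ z → f x ⊓ f z ≤ f y)
    (hcg : ∀ x y z : I, x ≤ y → y ≤ z → g x ⊓ g z ≤ g y) :
    meetConv f g = f ↔ ((∀ x, fL g x ≤ fL f x) ∧ (∀ x, fR f x ≤ fR g x)) := by
  constructor
  · intro h
    -- key inequality (i)
    have key : ∀ y z : I, f y ⊓ g z ≤ f (y ⊓ z) := by
      intro y z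
      have : f y ⊓ g z ≤ meetConv f g (y ⊓ z) := le_sSup ⟨y, z, rfl, rfl⟩
      rwa [h] at this
    -- claim A : f y ≤ fR g y
    have clA : ∀ y : I, f y ≤ fR g y := by
      intro y
      have hy : meetConv f g y ≤ fR g y := by
        apply sSup_le
        rintro v ⟨a, b, hab, rfl⟩
        have hb : y ≤ b := hab ▸ inf_le_right
        exact le_trans inf_le_right (le_sSup ⟨b, hb, rfl⟩)
      rwa [h] at hy
    -- claim B : g z ≤ fL f z
    have clB : ∀ z : I, g z ≤ fL f z := by
      intro z
      by_cases hgz : g z ≤ f z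
      · exact le_trans hgz (self_le_fL f z)
      · have hfz : f z < g z := not_le.mp hgz
        have hRz : fR f z ≤ f z := by
          apply sSup_le
          rintro v ⟨w, hw, rfl⟩
          have h1 : f w ⊓ g z ≤ f z := by
            have := key w z
            rwa [inf_eq_right.mpr (show z ≤ w from hw)] at this
          by_contra hlt
          have hlt' : f z < f w := not_le.mp hlt
          have : f z < f w ⊓ g z := lt_inf_iff.mpr ⟨hlt', hfz⟩
          exact absurd h1 (not_le.mpr this)
        have hcov : (1 : I) ≤ fL f z ⊔ fR f z := by
          rw [← hnf]
          apply sSup_le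
          rintro v ⟨a, rfl⟩
          rcases le_total a z with hz | hz
          · have h' : f a ≤ fL f z := le_sSup ⟨a, hz, rfl⟩
            exact le_trans h' le_sup_left
          · have h' : f a ≤ fR f z := le_sSup ⟨a, hz, rfl⟩
            exact le_trans h' le_sup_right
        rcases le_total (fL f z) (fR f z) with hc | hc
        · rw [sup_eq_right.mpr hc] at hcov
          have h1 : f z = 1 := le_antisymm le_one' (le_trans hcov hRz)
          rw [h1] at hfz
          exact absurd hfz (not_lt.mpr le_one')
        · rw [sup_eq_left.mpr hc] at hcov
          exact le_trans le_one' hcov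
    constructor
    · intro x
      apply sSup_le
      rintro v ⟨a, ha, rfl⟩
      exact le_trans (clB a) (fL_mono f ha)
    · intro x
      apply sSup_le
      rintro v ⟨a, ha, rfl⟩
      exact le_trans (clA a) (fR_anti g ha)
  · rintro ⟨hL, hR⟩
    funext x
    apply le_antisymm
    · apply sSup_le
      rintro v ⟨y, z, hyz, rfl⟩
      rcases le_total y z with hc | hc
      · rw [inf_eq_left.mpr hc] at hyz
        subst hyz
        exact inf_le_left
      · rw [inf_eq_right.mpr hc] at hyz
        subst hyz
        -- need f y ⊓ g z ≤ f z, with z ≤ y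
        by_contra hlt
        have hlt' : f z < f y ⊓ g z := not_le.mp hlt
        have h1 : f z < f y := lt_of_lt_of_le hlt' inf_le_left
        have h2 : f z < g z := lt_of_lt_of_le hlt' inf_le_right
        have h3 : f z < fL f z := lt_of_lt_of_le h2 (le_trans (self_le_fL g z) (hL z))
        have h4 : ∃ a, a ≤ z ∧ f z < f a := by
          by_contra hno
          push_neg at hno
          have : fL f z ≤ f z := by
            apply sSup_le
            rintro v ⟨a, ha, rfl⟩
            exact hno a ha
          exact absurd this (not_le.mpr h3)
        obtain ⟨a, ha, hfa⟩ := h4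
        have := hcf a z y ha hc
        have : f z < f a ⊓ f y := lt_inf_iff.mpr ⟨hfa, h1⟩
        exact absurd (hcf a z y ha hc) (not_le.mpr this)
    · have h1 : f x ≤ fR g x := le_trans (self_le_fR f x) (hR x)
      by_cases hex : ∃ z, x ≤ z ∧ f x ≤ g z
      · obtain ⟨z, hz, hfg⟩ := hex
        have : f x ≤ f x ⊓ g z := le_inf le_rfl hfg
        exact le_trans this (le_sSup ⟨x, z, inf_eq_left.mpr hz, rfl⟩)
      · push_neg at hex
        have h2 : fR g x ≤ meetConv f g x := by
          apply sSup_le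
          rintro v ⟨z, hz, rfl⟩
          have hgz : g z < f x := hex z hz
          have : g z = f x ⊓ g z := (inf_eq_right.mpr (le_of_lt hgz)).symm
          rw [this]
          exact le_sSup ⟨x, z, inf_eq_left.mpr hz, rfl⟩
        exact le_trans h1 h2
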